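/- In the ISCP dynamic-programming setting, suppose index j+1 exists, blk(j+1) = blk(j), and blk(j+1) ≥ 1 (i.e., S_{j+1} is not the first set of its block and a previous block exists); let k be the largest index with blk(k) = blk(j) − 1. Then for every W ⊆ α and b ∈ {1,2}: OPT(W, j+1, b) = min( 2 + OPT(W \ S_{j+1}, k, flag(blk(j) − 1)), OPT(W, j, b) ), where arithmetic is in ℕ ∪ {∞} with 2 + ∞ = ∞. -/

import Mathlib

/-- `OPTI S blk flag W j b` in the ISCP dynamic-programming setting: the infimum, over
all index sets `X ⊆ {i : i ≤ j}` covering `W`, containing at most one index from every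
block `β_x` with `x ≤ blk j` and exactly one index from every such block whose (updated)
flag is `2`, of `2|X|` plus the number of blocks `β_x` (`x ≤ blk j`) with (updated) flag
`1` that `X` misses; here the flag of block `blk j` is overridden to be `b`.  The value
is `∞` if no such `X` exists. -/
noncomputable def OPTI {α : Type*} [DecidableEq α] {m q : ℕ}
    (S : Fin m → Finset α) (blk : Fin m → Fin q) (flag : Fin q → ℕ)
    (W : Finset α) (j : Fin m) (b : ℕ) : ℕ∞ :=
  sInf { n : ℕ∞ | ∃ X : Finset (Fin m),
    (∀ i ∈ X, i ≤ j) ∧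
    (W ⊆ X.biUnion S) ∧
    (∀ x : Fin q, x ≤ blk j → (X.filter (fun i => blk i = x)).card ≤ 1) ∧
    (∀ x : Fin q, x ≤ blk j → Function.update flag (blk j) b x = 2 →
      (X.filter (fun i => blk i = x)).card = 1) ∧
    n = 2 * (X.card : ℕ∞) +
      ((Finset.univ.filter (fun x : Fin q =>
        x ≤ blk j ∧ Function.update flag (blk j) b x = 1 ∧
          ∀ i ∈ X, blk i ≠ x)).card : ℕ∞) }

lemma two_add_sInf_image (b : Set ℕ∞) : sInf ((2 + ·) '' b) = 2 + sInf b := by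
  rcases b.eq_empty_or_nonempty with rfl | hb
  · simp
  · refine le_antisymm (sInf_le ⟨_, csInf_mem hb, rfl⟩) (le_sInf ?_)
    rintro _ ⟨x, hx, rfl⟩
    exact add_le_add (le_refl 2) (sInf_le hx)

/-- ISCP recurrence when `S_{j+1}` is not the first set of its block and a
previous block exists; `k` is the largest index with `blk k = blk j − 1`.  For
`b ∈ {1,2}`: `OPT(W, j+1, b) = min(2 + OPT(W \\ S_{j+1}, k, flag(blk j − 1)), OPT(W, j, b))`. -/
theorem iscp_recurrence_same_block
    {α : Type*} [DecidableEq α] {m q : ℕ} (hm : 0 < m) (hq : 0 < q)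
    (S : Fin m → Finset α) (blk : Fin m → Fin q)
    (hmono : Monotone blk) (hsurj : Function.Surjective blk)
    (flag : Fin q → ℕ) (hflag : ∀ x, flag x = 1 ∨ flag x = 2)
    (j j' : Fin m) (hj' : (j' : ℕ) = (j : ℕ) + 1) (hblk : blk j' = blk j)
    (hpos : 1 ≤ (blk j' : ℕ))
    (k : Fin m) (hk : (blk k : ℕ) = (blk j : ℕ) - 1)
    (hkmax : ∀ i : Fin m, (blk i : ℕ) = (blk j : ℕ) - 1 → i ≤ k)
    (W : Finset α) (b : ℕ) (hb : b = 1 ∨ b = 2) :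
    OPTI S blk flag W j' b =
      min (2 + OPTI S blk flag (W \ S j') k (flag (blk k)))
        (OPTI S blk flag W j b) := by
  have hblkval : (blk j' : ℕ) = (blk j : ℕ) := by rw [hblk]
  have hbkval : (blk k : ℕ) + 1 = (blk j' : ℕ) := by omega
  -- basic index facts
  have hkj' : k < j' := by
    by_contra h
    push_neg at h
    have := hmono h
    rw [Fin.le_def] at this
    omega
  have hkj : k ≤ j := by
    rw [Fin.le_def]
    have := hkj'
    rw [Fin.lt_def] at this
    omega
  have hjj' : j ≤ j' := by rw [Fin.le_def]; omega
  have hlek : ∀ x : Fin q, x ≤ blk k ↔ (x ≤ blk j' ∧ x ≠ blk j') := by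
    intro x
    rw [Fin.le_def, Fin.le_def, Ne, Fin.ext_iff]
    omega
  have hik : ∀ i : Fin m, i ≤ k ↔ blk i ≤ blk k := by
    intro i
    constructor
    · exact fun h => hmono h
    · intro h
      rcases le_or_gt i k with h' | h'
      · exact h'
      · have h2 : blk k ≤ blk i := hmono h'.le
        have h3 : blk i = blk k := le_antisymm h h2
        refine hkmax i ?_
        rw [h3]; exact hk
  have hkj'blk : blk k ≤ blk j' := by rw [Fin.le_def]; omega
  have hupd' : ∀ x : Fin q, x ≤ blk k → Function.update flag (blk j') b x = flag x := by
    intro x hx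
    exact Function.update_of_ne ((hlek x).mp hx).2 _ _
  have hupdk : Function.update flag (blk k) (flag (blk k)) = flag :=
    Function.update_eq_self _ _
  -- the filter-set equality used in both directions
  have hF : ∀ X : Finset (Fin m), j' ∈ X →
      (Finset.univ.filter (fun x : Fin q =>
        x ≤ blk j' ∧ Function.update flag (blk j') b x = 1 ∧ ∀ i ∈ X, blk i ≠ x)) =
      (Finset.univ.filter (fun x : Fin q =>
        x ≤ blk k ∧ Function.update flag (blk k) (flag (blk k)) x = 1 ∧
          ∀ i ∈ X.erase j', blk i ≠ x)) := by
    intro X hj'X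
    ext x
    simp only [Finset.mem_filter, Finset.mem_univ, true_and, hupdk]
    constructor
    · rintro ⟨hx1, hx2, hx3⟩
      have hxk : x ≤ blk k := (hlek x).mpr ⟨hx1, Ne.symm (hx3 j' hj'X)⟩
      rw [hupd' x hxk] at hx2
      exact ⟨hxk, hx2, fun i hi => hx3 i (Finset.mem_of_mem_erase hi)⟩
    · rintro ⟨hx1, hx2, hx3⟩
      refine ⟨le_trans hx1 hkj'blk, by rw [hupd' x hx1]; exact hx2, ?_⟩
      intro i hi
      by_cases hij : i = j'
      · subst hij
        exact Ne.symm ((hlek x).mp hx1).2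
      · exact hx3 i (Finset.mem_erase.mpr ⟨hij, hi⟩)
  -- set equality
  have hset : { n : ℕ∞ | ∃ X : Finset (Fin m),
      (∀ i ∈ X, i ≤ j') ∧
      (W ⊆ X.biUnion S) ∧
      (∀ x : Fin q, x ≤ blk j' → (X.filter (fun i => blk i = x)).card ≤ 1) ∧
      (∀ x : Fin q, x ≤ blk j' → Function.update flag (blk j') b x = 2 →
        (X.filter (fun i => blk i = x)).card = 1) ∧
      n = 2 * (X.card : ℕ∞) +
        ((Finset.univ.filter (fun x : Fin q =>
          x ≤ blk j' ∧ Function.update flag (blk j') b x = 1 ∧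
            ∀ i ∈ X, blk i ≠ x)).card : ℕ∞) } =
      ((2 + ·) '' { n : ℕ∞ | ∃ X : Finset (Fin m),
      (∀ i ∈ X, i ≤ k) ∧
      ((W \ S j') ⊆ X.biUnion S) ∧
      (∀ x : Fin q, x ≤ blk k → (X.filter (fun i => blk i = x)).card ≤ 1) ∧
      (∀ x : Fin q, x ≤ blk k → Function.update flag (blk k) (flag (blk k)) x = 2 →
        (X.filter (fun i => blk i = x)).card = 1) ∧
      n = 2 * (X.card : ℕ∞) +
        ((Finset.univ.filter (fun x : Fin q =>
          x ≤ blk k ∧ Function.update flag (blk k) (flag (blk k)) x = 1 ∧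
            ∀ i ∈ X, blk i ≠ x)).card : ℕ∞) }) ∪
      { n : ℕ∞ | ∃ X : Finset (Fin m),
      (∀ i ∈ X, i ≤ j) ∧
      (W ⊆ X.biUnion S) ∧
      (∀ x : Fin q, x ≤ blk j → (X.filter (fun i => blk i = x)).card ≤ 1) ∧
      (∀ x : Fin q, x ≤ blk j → Function.update flag (blk j) b x = 2 →
        (X.filter (fun i => blk i = x)).card = 1) ∧
      n = 2 * (X.card : ℕ∞) +
        ((Finset.univ.filter (fun x : Fin q =>
          x ≤ blk j ∧ Function.update flag (blk j) b x = 1 ∧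
            ∀ i ∈ X, blk i ≠ x)).card : ℕ∞) } := by
    ext n
    simp only [Set.mem_union, Set.mem_image, Set.mem_setOf_eq]
    constructor
    · rintro ⟨X, hX1, hX2, hX3, hX4, rfl⟩
      by_cases hj'X : j' ∈ X
      · -- use X.erase j' as a witness for the first set
        left
        have hXk : ∀ i ∈ X.erase j', i ≤ k := by
          intro i hi
          rw [Finset.mem_erase] at hi
          have hbij : blk i ≤ blk j' := hmono (hX1 i hi.2)
          have hne' : blk i ≠ blk j' := by
            intro heq
            have h2lt : 1 < (X.filter (fun i => blk i = blk j')).card :=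
              Finset.one_lt_card.mpr ⟨i, Finset.mem_filter.mpr ⟨hi.2, heq⟩, j',
                Finset.mem_filter.mpr ⟨hj'X, rfl⟩, hi.1⟩
            have := hX3 (blk j') le_rfl
            omega
          refine (hik i).mpr ?_
          rw [Fin.le_def] at hbij ⊢
          rw [Ne, Fin.ext_iff] at hne'
          omega
        have hfilt : ∀ x : Fin q, x ≤ blk k →
            (X.erase j').filter (fun i => blk i = x) = X.filter (fun i => blk i = x) := by
          intro x hx
          ext i
          simp only [Finset.mem_filter, Finset.mem_erase]
          constructor
          · rintro ⟨⟨_, hiX⟩, hbx⟩; exact ⟨hiX, hbx⟩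
          · rintro ⟨hiX, hbx⟩
            refine ⟨⟨?_, hiX⟩, hbx⟩
            rintro rfl
            exact ((hlek x).mp hx).2 hbx.symm
        refine ⟨_, ⟨X.erase j', hXk, ?_, ?_, ?_, rfl⟩, ?_⟩
        · intro w hw
          rw [Finset.mem_sdiff] at hw
          obtain ⟨i, hi, hwi⟩ := Finset.mem_biUnion.mp (hX2 hw.1)
          refine Finset.mem_biUnion.mpr ⟨i, Finset.mem_erase.mpr ⟨?_, hi⟩, hwi⟩
          rintro rfl
          exact hw.2 hwi
        · intro x hx
          rw [hfilt x hx]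
          exact hX3 x (le_trans hx hkj'blk)
        · intro x hx hx2
          rw [hupdk] at hx2
          rw [hfilt x hx]
          refine hX4 x (le_trans hx hkj'blk) ?_
          rw [hupd' x hx]
          exact hx2
        · -- value equality
          rw [hF X hj'X]
          have hcard : X.card = (X.erase j').card + 1 :=
            (Finset.card_erase_add_one hj'X).symm
          rw [hcard]
          push_cast
          ring
      · -- X is a witness for the second set
        right
        refine ⟨X, fun i hi => ?_, hX2, ?_, ?_, ?_⟩
        · have h1 := hX1 i hi
          rw [Fin.le_def] at h1 ⊢
          have : i ≠ j' := by rintro rfl; exact hj'X hi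
          rw [Ne, Fin.ext_iff] at this
          omega
        · rw [← hblk]; exact hX3
        · rw [← hblk]; exact hX4
        · rw [← hblk]
    · rintro (⟨n', ⟨X', h1, h2, h3, h4, rfl⟩, rfl⟩ | ⟨X, h1, h2, h3, h4, rfl⟩)
      · -- insert j' X' is a witness
        have hj'notin : j' ∉ X' := by
          intro h
          exact absurd (h1 j' h) (not_le.mpr hkj')
        have hblkX' : ∀ i ∈ X', blk i ≠ blk j' := by
          intro i hi heq
          have hbk : blk i ≤ blk k := (hik i).mp (h1 i hi)
          rw [Fin.le_def] at hbk
          rw [Fin.ext_iff] at heq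
          omega
        have hfij : (insert j' X').filter (fun i => blk i = blk j') = {j'} := by
          ext i
          simp only [Finset.mem_filter, Finset.mem_insert, Finset.mem_singleton]
          constructor
          · rintro ⟨hi | hi, hbx⟩
            · exact hi
            · exact absurd hbx (hblkX' i hi)
          · rintro rfl; exact ⟨Or.inl rfl, rfl⟩
        have hfix : ∀ x : Fin q, x ≠ blk j' →
            (insert j' X').filter (fun i => blk i = x) = X'.filter (fun i => blk i = x) := by
          intro x hx
          rw [Finset.filter_insert, if_neg (fun h => hx h.symm)]
        refine ⟨insert j' X', ?_, ?_, ?_, ?_, ?_⟩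
        · intro i hi
          rcases Finset.mem_insert.mp hi with rfl | hi
          · exact le_refl _
          · exact le_trans (h1 i hi) hkj'.le
        · intro w hw
          by_cases hws : w ∈ S j'
          · exact Finset.mem_biUnion.mpr ⟨j', Finset.mem_insert_self _ _, hws⟩
          · obtain ⟨i, hi, hwi⟩ := Finset.mem_biUnion.mp
              (h2 (Finset.mem_sdiff.mpr ⟨hw, hws⟩))
            exact Finset.mem_biUnion.mpr ⟨i, Finset.mem_insert_of_mem hi, hwi⟩
        · intro x hx
          by_cases hxe : x = blk j'
          · subst hxe; rw [hfij]; simp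
          · rw [hfix x hxe]
            exact h3 x ((hlek x).mpr ⟨hx, hxe⟩)
        · intro x hx hx2
          by_cases hxe : x = blk j'
          · subst hxe; rw [hfij]; simp
          · have hxk : x ≤ blk k := (hlek x).mpr ⟨hx, hxe⟩
            rw [hfix x hxe]
            refine h4 x hxk ?_
            rw [hupdk]
            rw [hupd' x hxk] at hx2
            exact hx2
        · -- value equality
          rw [hF (insert j' X') (Finset.mem_insert_self _ _),
            Finset.erase_insert hj'notin,
            Finset.card_insert_of_notMem hj'notin]
          push_cast
          ring
      · -- X is a witness
        refine ⟨X, fun i hi => le_trans (h1 i hi) hjj', h2, ?_, ?_, ?_⟩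
        · rw [hblk]; exact h3
        · rw [hblk]; exact h4
        · rw [hblk]
  unfold OPTI
  rw [hset, sInf_union, two_add_sInf_image]
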